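/- Let L : ℝ[X] → ℝ[X] be a linear map that is skew symmetric with respect to the inner product, i.e. ⟨L f, g⟩ = −⟨f, L g⟩ for all polynomials f, g, and that satisfies L(x^n) = γ_n x^{n+1} + (terms of degree ≤ n) with γ_n ≠ 0 for every n ≥ 0. Define a linear map D : ℝ[X] → ℝ[X] on monomials by D(1) := 0 and D(x^n) := Σ_{k=0}^{n−1} x^k · L(x^{n−k−1}) for n ≥ 1. Then: (i) D X − X D = L, where X is the multiplication operator (X f)(x) := x f(x); (ii) D is symmetric with respect to the inner product, i.e. ⟨D f, g⟩ = ⟨f, D g⟩ for all polynomials f, g; (iii) D(x^n) = λ_n x^n + (terms of degree < n), where λ_0 = 0 and λ_{n+1} − λ_n = γ_n (so λ_{n+1} ≠ λ_n for all n). -/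

import Mathlib

open Polynomial MeasureTheory

/-- **Proposition 2.3.** From a skew symmetric degree-raising operator `L` one constructs a
symmetric operator `D` with `D(1) = 0`, `D(xⁿ) = Σ_{k=0}^{n-1} x^k L(x^{n-k-1})`, satisfying
`DX - XD = L` and `D(xⁿ) = λₙ xⁿ + lower order` with `λ₀ = 0`, `λₙ₊₁ - λₙ = γₙ`. -/
theorem symmetric_operator_from_skew
    (μ : Measure ℝ)
    (hint : ∀ f : ℝ[X], Integrable (fun x => f.eval x) μ)
    (L : ℝ[X] →ₗ[ℝ] ℝ[X]) (γ : ℕ → ℝ)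
    (hskew : ∀ f g : ℝ[X],
      (∫ x, (L f).eval x * g.eval x ∂μ) = - ∫ x, f.eval x * (L g).eval x ∂μ)
    (hγ : ∀ n, γ n ≠ 0)
    (hLdeg : ∀ n : ℕ, ∃ r : ℝ[X], r.degree ≤ (n : ℕ) ∧
      L (X ^ n) = C (γ n) * X ^ (n + 1) + r)
    (D : ℝ[X] →ₗ[ℝ] ℝ[X])
    (hD : ∀ n : ℕ, D (X ^ n) = ∑ k ∈ Finset.range n, X ^ k * L (X ^ (n - k - 1))) :
    (∀ f : ℝ[X], D (X * f) - X * D f = L f) ∧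
    (∀ f g : ℝ[X],
      (∫ x, (D f).eval x * g.eval x ∂μ) = ∫ x, f.eval x * (D g).eval x ∂μ) ∧
    (∃ lam : ℕ → ℝ, lam 0 = 0 ∧ (∀ n : ℕ, lam (n + 1) - lam n = γ n) ∧
      ∀ n : ℕ, ∃ r : ℝ[X], r.degree < (n : ℕ) ∧
        D (X ^ n) = C (lam n) * X ^ n + r) := by
  have hInt : ∀ f g : ℝ[X], Integrable (fun x => f.eval x * g.eval x) μ := by
    intro f g
    simpa [eval_mul] using hint (f * g)
  -- core of part (i)
  have hcore : ∀ n : ℕ, D (X * X ^ n) - X * D (X ^ n) = L (X ^ n) := by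
    intro n
    have h1 : (X : ℝ[X]) * X ^ n = X ^ (n + 1) := by ring
    rw [h1, hD (n + 1), hD n, Finset.mul_sum, Finset.sum_range_succ']
    have h2 : ∀ k ∈ Finset.range n,
        (X : ℝ[X]) ^ (k + 1) * L (X ^ (n + 1 - (k + 1) - 1))
          = X * (X ^ k * L (X ^ (n - k - 1))) := by
      intro k hk
      have : n + 1 - (k + 1) - 1 = n - k - 1 := by omega
      rw [this]; ring
    rw [Finset.sum_congr rfl h2]
    simp only [pow_zero, one_mul, Nat.add_sub_cancel, Nat.sub_zero]
    ring
  -- core of part (ii)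
  have key : ∀ n m : ℕ,
      (∫ x, (D (X ^ n)).eval x * ((X : ℝ[X]) ^ m).eval x ∂μ)
        = ∫ x, ((X : ℝ[X]) ^ n).eval x * (D (X ^ m)).eval x ∂μ := by
    intro n m
    set t := n + m with ht
    set a : ℕ → ℝ := fun i => ∫ x, (L (X ^ i)).eval x * x ^ (t - 1 - i) ∂μ with haa
    have ha : ∀ i, i < t → a i = - a (t - 1 - i) := by
      intro i hi
      have h1 : (∫ x, (L (X ^ i)).eval x * ((X : ℝ[X]) ^ (t - 1 - i)).eval x ∂μ)
          = - ∫ x, ((X : ℝ[X]) ^ i).eval x * (L (X ^ (t - 1 - i))).eval x ∂μ :=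
        hskew (X ^ i) (X ^ (t - 1 - i))
      have h2 : t - 1 - (t - 1 - i) = i := by omega
      simp only [haa, h2]
      simp only [eval_pow, eval_X] at h1
      rw [h1]
      congr 1
      apply integral_congr_ae
      filter_upwards with x
      ring
    have h0 : ∑ i ∈ Finset.range t, a i = 0 := by
      have hr := Finset.sum_range_reflect a t
      have hneg : ∑ j ∈ Finset.range t, a (t - 1 - j)
          = ∑ j ∈ Finset.range t, (- a j) := by
        apply Finset.sum_congr rfl
        intro j hj
        have := ha j (Finset.mem_range.mp hj)
        linarith
      rw [hneg, Finset.sum_neg_distrib] at hr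
      linarith
    have hsplit := Finset.sum_range_add a n m
    have h3 : ∑ i ∈ Finset.range m, a (n + i) = - ∑ i ∈ Finset.range m, a i := by
      have hterm : ∀ i ∈ Finset.range m, a (n + i) = - a (m - 1 - i) := by
        intro i hi
        have hi' := Finset.mem_range.mp hi
        have h := ha (n + i) (by omega)
        have : t - 1 - (n + i) = m - 1 - i := by omega
        rw [this] at h
        exact h
      rw [Finset.sum_congr rfl hterm, Finset.sum_neg_distrib,
        Finset.sum_range_reflect a m]
    have hmain : ∑ i ∈ Finset.range n, a i = ∑ i ∈ Finset.range m, a i := by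
      rw [← ht, h0, h3] at hsplit
      linarith
    -- left side equals ∑_{i<n} a i
    have hL : (∫ x, (D (X ^ n)).eval x * ((X : ℝ[X]) ^ m).eval x ∂μ)
        = ∑ i ∈ Finset.range n, a i := by
      rw [hD n]
      have heq : (fun x : ℝ => (∑ k ∈ Finset.range n, X ^ k * L (X ^ (n - k - 1))).eval x
          * ((X : ℝ[X]) ^ m).eval x)
          = fun x : ℝ => ∑ k ∈ Finset.range n,
            ((X ^ k * L (X ^ (n - k - 1)) * X ^ m : ℝ[X])).eval x := by
        funext x
        rw [eval_finset_sum, Finset.sum_mul]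
        apply Finset.sum_congr rfl
        intro k _
        simp [eval_mul]
      rw [heq, integral_finset_sum _ (fun k _ => hint _), ← Finset.sum_range_reflect a n]
      apply Finset.sum_congr rfl
      intro k hk
      have hk' := Finset.mem_range.mp hk
      have e1 : n - 1 - k = n - k - 1 := by omega
      have e2 : t - 1 - (n - k - 1) = m + k := by omega
      simp only [haa, e1, e2]
      apply integral_congr_ae
      filter_upwards with x
      simp [eval_mul, eval_pow]
      ring
    -- right side equals ∑_{i<m} a i
    have hR : (∫ x, ((X : ℝ[X]) ^ n).eval x * (D (X ^ m)).eval x ∂μ)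
        = ∑ i ∈ Finset.range m, a i := by
      rw [hD m]
      have heq : (fun x : ℝ => ((X : ℝ[X]) ^ n).eval x
          * (∑ k ∈ Finset.range m, X ^ k * L (X ^ (m - k - 1))).eval x)
          = fun x : ℝ => ∑ k ∈ Finset.range m,
            ((X ^ n * (X ^ k * L (X ^ (m - k - 1))) : ℝ[X])).eval x := by
        funext x
        rw [eval_finset_sum, Finset.mul_sum]
        apply Finset.sum_congr rfl
        intro k _
        simp [eval_mul]
      rw [heq, integral_finset_sum _ (fun k _ => hint _), ← Finset.sum_range_reflect a m]
      apply Finset.sum_congr rfl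
      intro k hk
      have hk' := Finset.mem_range.mp hk
      have e1 : m - 1 - k = m - k - 1 := by omega
      have e2 : t - 1 - (m - k - 1) = n + k := by omega
      simp only [haa, e1, e2]
      apply integral_congr_ae
      filter_upwards with x
      simp [eval_mul, eval_pow]
      ring
    rw [hL, hR, hmain]
  refine ⟨?_, ?_, ?_⟩
  · -- part (i)
    intro f
    induction f using Polynomial.induction_on' with
    | add p q hp hq =>
      rw [mul_add, map_add, map_add, mul_add, map_add, ← hp, ← hq]
      ring
    | monomial n c =>
      have hm : (monomial n c : ℝ[X]) = c • X ^ n := by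
        rw [smul_eq_C_mul, C_mul_X_pow_eq_monomial]
      rw [hm, mul_smul_comm]
      simp only [_root_.map_smul]
      rw [mul_smul_comm, ← smul_sub, hcore n]
  · -- part (ii)
    intro f g
    induction f using Polynomial.induction_on' with
    | add p q hp hq =>
      have h1 : (fun x : ℝ => (D (p + q)).eval x * g.eval x)
          = fun x : ℝ => (D p).eval x * g.eval x + (D q).eval x * g.eval x := by
        funext x; rw [map_add]; simp [add_mul]
      have h2 : (fun x : ℝ => (p + q).eval x * (D g).eval x)
          = fun x : ℝ => p.eval x * (D g).eval x + q.eval x * (D g).eval x := by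
        funext x; simp [add_mul]
      rw [h1, h2, integral_add (hInt _ _) (hInt _ _), integral_add (hInt _ _) (hInt _ _),
        hp, hq]
    | monomial n c =>
      induction g using Polynomial.induction_on' with
      | add p q hp hq =>
        have h1 : (fun x : ℝ => (D (monomial n c)).eval x * (p + q).eval x)
            = fun x : ℝ => (D (monomial n c)).eval x * p.eval x
              + (D (monomial n c)).eval x * q.eval x := by
          funext x; simp [mul_add]
        have h2 : (fun x : ℝ => (monomial n c).eval x * (D (p + q)).eval x)
            = fun x : ℝ => (monomial n c).eval x * (D p).eval x
              + (monomial n c).eval x * (D q).eval x := by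
          funext x; rw [map_add]; simp [mul_add]
        rw [h1, h2, integral_add (hInt _ _) (hInt _ _),
          integral_add (hInt _ _) (hInt _ _), hp, hq]
      | monomial m b =>
        have hmc : (monomial n c : ℝ[X]) = c • X ^ n := by
          rw [smul_eq_C_mul, C_mul_X_pow_eq_monomial]
        have hmb : (monomial m b : ℝ[X]) = b • X ^ m := by
          rw [smul_eq_C_mul, C_mul_X_pow_eq_monomial]
        rw [hmc, hmb]
        simp only [_root_.map_smul]
        have h1 : (fun x : ℝ => (c • D (X ^ n)).eval x * ((b • X ^ m : ℝ[X])).eval x)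
            = fun x : ℝ => (c * b) * ((D (X ^ n)).eval x * ((X : ℝ[X]) ^ m).eval x) := by
          funext x
          simp [Polynomial.eval_smul, smul_eq_mul]
          ring
        have h2 : (fun x : ℝ => ((c • X ^ n : ℝ[X])).eval x * (b • D (X ^ m)).eval x)
            = fun x : ℝ => (c * b) * (((X : ℝ[X]) ^ n).eval x * (D (X ^ m)).eval x) := by
          funext x
          simp [Polynomial.eval_smul, smul_eq_mul]
          ring
        rw [h1, h2, integral_const_mul, integral_const_mul, key n m]
  · -- part (iii)
    choose r hrdeg hLr using hLdeg
    refine ⟨fun n => ∑ k ∈ Finset.range n, γ k, by simp, ?_, ?_⟩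
    · intro n
      simp only [Finset.sum_range_succ]
      ring
    · intro n
      refine ⟨∑ k ∈ Finset.range n, X ^ k * r (n - k - 1), ?_, ?_⟩
      · refine lt_of_le_of_lt (Polynomial.degree_sum_le _ _) ?_
        rw [Finset.sup_lt_iff (by exact_mod_cast WithBot.bot_lt_coe (n : ℕ))]
        intro k hk
        have hk' := Finset.mem_range.mp hk
        refine lt_of_le_of_lt (Polynomial.degree_mul_le _ _) ?_
        have h1 : ((X : ℝ[X]) ^ k).degree = (k : WithBot ℕ) := by
          simpa using Polynomial.degree_X_pow (R := ℝ) k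
        rw [h1]
        calc (k : WithBot ℕ) + (r (n - k - 1)).degree
            ≤ (k : WithBot ℕ) + ((n - k - 1 : ℕ) : WithBot ℕ) :=
              add_le_add_right (hrdeg _) _
          _ = ((k + (n - k - 1) : ℕ) : WithBot ℕ) := by push_cast; ring
          _ < ((n : ℕ) : WithBot ℕ) := by
              exact_mod_cast (by omega : k + (n - k - 1) < n)
      · rw [hD n]
        have hterm : ∀ k ∈ Finset.range n, (X : ℝ[X]) ^ k * L (X ^ (n - k - 1))
            = C (γ (n - k - 1)) * X ^ n + X ^ k * r (n - k - 1) := by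
          intro k hk
          have hk' := Finset.mem_range.mp hk
          rw [hLr (n - k - 1)]
          have h1 : n - k - 1 + 1 = n - k := by omega
          have h3 : (X : ℝ[X]) ^ k * X ^ (n - k) = X ^ n := by
            rw [← pow_add]
            congr 1
            omega
          rw [h1, ← h3]
          ring
        have hsum : ∑ k ∈ Finset.range n, γ (n - k - 1) = ∑ k ∈ Finset.range n, γ k := by
          rw [← Finset.sum_range_reflect γ n]
          refine Finset.sum_congr rfl fun k hk => ?_
          congr 1
          omega
        rw [Finset.sum_congr rfl hterm, Finset.sum_add_distrib, ← Finset.sum_mul,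
          ← map_sum, hsum]
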